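/- Every idempotent of ℛ_n is conjugate by a unit to a standard idempotent: E(ℛ_n) = ⋃_{w ∈ W} w Λ_n w^{-1}, where Λ_n is the set of idempotents (id, p) with p an ordered partition of [n] into consecutive intervals ({1,...,k_1},{k_1+1,...,k_2},...,{k_{m-1}+1,...,n}). -/

import Mathlib

/-- `l` is an ordered set partition of `{0,...,n-1}`: a list of pairwise disjoint
nonempty blocks whose union is everything. -/
def IsOSP (n : ℕ) (l : List (Finset (Fin n))) : Prop :=
  (∀ b ∈ l, b ≠ ∅) ∧ l.Pairwise Disjoint ∧ l.foldr (· ∪ ·) ∅ = Finset.univ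

/-- Intersection product of ordered set partitions: list the nonempty
intersections `p_i ∩ q_j`, ordered first by `j` then by `i`. -/
def ospMul (n : ℕ) (p q : List (Finset (Fin n))) : List (Finset (Fin n)) :=
  (q.flatMap (fun b => p.map (fun a => a ∩ b))).filter (fun a => a ≠ ∅)

/-- Blockwise application of a permutation to an ordered set partition. -/
def permAct (n : ℕ) (σ : Equiv.Perm (Fin n)) (p : List (Finset (Fin n))) :
    List (Finset (Fin n)) :=
  p.map (fun b => b.image σ)

/-- The PM-monoid product: `(σ,p)·(τ,q) = (στ, τ⁻¹(p) * q)`. -/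
def pmMul (n : ℕ) (x y : Equiv.Perm (Fin n) × List (Finset (Fin n))) :
    Equiv.Perm (Fin n) × List (Finset (Fin n)) :=
  (x.1 * y.1, ospMul n (permAct n y.1⁻¹ x.2) y.2)

/-- The identity element `(id, ({1,...,n}))` of the PM-monoid. -/
def pmId (n : ℕ) : Equiv.Perm (Fin n) × List (Finset (Fin n)) :=
  ((1 : Equiv.Perm (Fin n)), [(Finset.univ : Finset (Fin n))])

/-- `x* = (σ⁻¹, σ(p))`. -/
def pmStar (n : ℕ) (x : Equiv.Perm (Fin n) × List (Finset (Fin n))) :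
    Equiv.Perm (Fin n) × List (Finset (Fin n)) :=
  (x.1⁻¹, permAct n x.1 x.2)

/-- Stirling numbers of the second kind. -/
def stirling2 : ℕ → ℕ → ℕ
  | 0, 0 => 1
  | 0, _ + 1 => 0
  | _ + 1, 0 => 0
  | n + 1, m + 1 => (m + 1) * stirling2 n (m + 1) + stirling2 n m

/-- Interval ordered set partition: blocks are consecutive intervals in increasing order. -/
def IsIntervalOSP (n : ℕ) (l : List (Finset (Fin n))) : Prop :=
  IsOSP n l ∧ l.Pairwise (fun a b => ∀ x ∈ a, ∀ y ∈ b, x < y)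

-- auxiliary lemmas
lemma mem_foldr_union {n : ℕ} (p : List (Finset (Fin n))) (x : Fin n)
    (hx : x ∈ p.foldr (· ∪ ·) ∅) : ∃ b ∈ p, x ∈ b := by
  induction p with
  | nil => simp at hx
  | cons a t ih =>
    simp only [List.foldr, Finset.mem_union] at hx
    rcases hx with h | h
    · exact ⟨a, List.mem_cons_self, h⟩
    · obtain ⟨b, hb, hxb⟩ := ih h
      exact ⟨b, List.mem_cons_of_mem _ hb, hxb⟩

lemma filter_map_inter {n : ℕ} (p : List (Finset (Fin n)))
    (hne : ∀ b ∈ p, b ≠ ∅) (hdisj : p.Pairwise Disjoint) (b : Finset (Fin n)) (hb : b ∈ p) :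
    (p.map (fun a => a ∩ b)).filter (fun a => a ≠ ∅) = [b] := by
  induction p with
  | nil => simp at hb
  | cons c t ih =>
    rcases List.pairwise_cons.mp hdisj with ⟨hcd, hdt⟩
    rcases List.mem_cons.mp hb with rfl | hb'
    · have h1 : (t.map (fun a => a ∩ b)).filter (fun a => a ≠ ∅) = [] := by
        rw [List.filter_eq_nil_iff]
        intro a ha
        simp only [List.mem_map] at ha
        obtain ⟨a', ha', rfl⟩ := ha
        have : Disjoint b a' := hcd a' ha'
        simp [Finset.inter_comm, Finset.disjoint_iff_inter_eq_empty.mp this]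
      have h2 : b ∩ b = b := Finset.inter_self b
      simp only [List.map_cons, List.filter_cons, h2]
      have : (decide (b ≠ ∅)) = true := by
        simp [hne b (List.mem_cons_self)]
      rw [if_pos this, h1]
    · have h2 : c ∩ b = ∅ := by
        have : Disjoint c b := hcd b hb'
        exact Finset.disjoint_iff_inter_eq_empty.mp this
      simp only [List.map_cons, List.filter_cons, h2]
      rw [if_neg (by simp), ih (fun d hd => hne d (List.mem_cons_of_mem _ hd)) hdt hb']

lemma ospMul_self {n : ℕ} (p : List (Finset (Fin n))) (h : IsOSP n p) :
    ospMul n p p = p := by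
  obtain ⟨hne, hdisj, _⟩ := h
  unfold ospMul
  rw [List.filter_flatMap]
  have : ∀ b ∈ p, (p.map (fun a => a ∩ b)).filter (fun a => a ≠ ∅) = [b] :=
    fun b hb => filter_map_inter p hne hdisj b hb
  calc p.flatMap (fun b => (p.map (fun a => a ∩ b)).filter (fun a => decide (a ≠ ∅)))
      = p.flatMap (fun b => [b]) := by
        exact List.flatMap_congr this
    _ = p := by simp

lemma foldr_union_map_image {n : ℕ} (g : Fin n → Fin n) (p : List (Finset (Fin n))) :
    (p.map (fun b => b.image g)).foldr (· ∪ ·) ∅ = (p.foldr (· ∪ ·) ∅).image g := by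
  induction p with
  | nil => simp
  | cons a t ih => simp [ih, Finset.image_union]

lemma indexOf_append_lt {α : Type*} [DecidableEq α] {x : α} :
    ∀ {l1 : List α} (l2 : List α), x ∈ l1 → (l1 ++ l2).idxOf x < l1.length := by
  intro l1
  induction l1 with
  | nil => intro l2 h; simp at h
  | cons a t ih =>
    intro l2 h
    by_cases hxa : x = a
    · subst hxa; simp [List.idxOf_cons_self]
    · rcases List.mem_cons.mp h with h' | h'
      · exact absurd h' hxa
      · have := ih l2 h'
        simp only [List.cons_append, List.length_cons]
        rw [List.idxOf_cons_ne _ (fun hh : a = x => hxa hh.symm)]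
        omega

lemma pairwise_indexOf {α : Type*} [DecidableEq α] :
    ∀ (L : List (List α)), (L.flatMap id).Nodup →
    L.Pairwise (fun a b => ∀ x ∈ a, ∀ y ∈ b,
      (L.flatMap id).idxOf x < (L.flatMap id).idxOf y) := by
  intro L
  induction L with
  | nil => intro _; exact List.Pairwise.nil
  | cons a t ih =>
    intro hnd
    have hflat : (a :: t).flatMap id = a ++ t.flatMap id := by simp
    rw [hflat] at hnd ⊢
    have hnd' : (t.flatMap id).Nodup := (List.nodup_append.mp hnd).2.1
    have hdisjoint : ∀ z ∈ t.flatMap id, z ∉ a := by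
      intro z hz ha
      exact (List.nodup_append.mp hnd).2.2 z ha z hz rfl
    have hidx : ∀ z ∈ t.flatMap id,
        (a ++ t.flatMap id).idxOf z = a.length + (t.flatMap id).idxOf z := by
      intro z hz
      exact List.idxOf_append_of_notMem (hdisjoint z hz)
    constructor
    · intro b hb x hx y hy
      have hy' : y ∈ t.flatMap id := List.mem_flatMap.mpr ⟨b, hb, hy⟩
      have h1 : (a ++ t.flatMap id).idxOf x < a.length := indexOf_append_lt _ hx
      rw [hidx y hy']
      omega
    · have := ih hnd'
      refine this.imp_of_mem ?_
      intro b c hb hc h x hx y hy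
      have hx' : x ∈ t.flatMap id := List.mem_flatMap.mpr ⟨b, hb, hx⟩
      have hy' : y ∈ t.flatMap id := List.mem_flatMap.mpr ⟨c, hc, hy⟩
      rw [hidx x hx', hidx y hy']
      have := h x hx y hy
      omega

lemma ospMul_univ_left {n : ℕ} (q : List (Finset (Fin n))) (h : ∀ b ∈ q, b ≠ ∅) :
    ospMul n [Finset.univ] q = q := by
  unfold ospMul
  have h1 : q.flatMap (fun b => [Finset.univ].map (fun a => a ∩ b)) = q := by
    have : ∀ b ∈ q, [Finset.univ].map (fun a => a ∩ b) = [b] := by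
      intro b _; simp
    rw [List.flatMap_congr this, List.flatMap_singleton']
  rw [h1, List.filter_eq_self]
  intro a ha; simpa using h a ha

lemma ospMul_univ_right {n : ℕ} (q : List (Finset (Fin n))) (h : ∀ b ∈ q, b ≠ ∅) :
    ospMul n q [Finset.univ] = q := by
  unfold ospMul
  simp only [List.flatMap_cons, List.flatMap_nil, List.append_nil]
  have h1 : q.map (fun a => a ∩ Finset.univ) = q := by
    simp
  rw [h1, List.filter_eq_self]
  intro a ha; simpa using h a ha


/-- every idempotent is a unit-conjugate of a standard interval-partition
idempotent: `E(ℛ_n) = ⋃_{w ∈ W} w Λ_n w⁻¹`. -/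
theorem stmt10 (n : ℕ) (hn : 1 ≤ n)
    (x : Equiv.Perm (Fin n) × List (Finset (Fin n))) (hx : IsOSP n x.2) :
    pmMul n x x = x ↔
      ∃ (σ : Equiv.Perm (Fin n)) (p : List (Finset (Fin n))), IsIntervalOSP n p ∧
        x = pmMul n (pmMul n ((σ, [Finset.univ]) : Equiv.Perm (Fin n) × List (Finset (Fin n)))
          (1, p)) (σ⁻¹, [Finset.univ]) := by
  obtain ⟨hne, hdisj, huniv⟩ := hx
  constructor
  · intro h
    -- x.1 = 1
    have hx1 : x.1 = 1 := by
      have h1 : x.1 * x.1 = x.1 := congrArg Prod.fst h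
      exact mul_eq_left.mp h1
    -- the flattened list of sorted blocks
    set F : List (Fin n) := x.2.flatMap (fun b => b.sort (· ≤ ·)) with hF
    have hnd : F.Nodup := by
      rw [hF, List.nodup_flatMap]
      refine ⟨fun b _ => Finset.sort_nodup (s := b) .., ?_⟩
      refine hdisj.imp ?_
      intro a b hab z hz1 hz2
      rw [Finset.mem_sort] at hz1 hz2
      exact Finset.disjoint_left.mp hab hz1 hz2
    have hmem : ∀ z : Fin n, z ∈ F := by
      intro z
      have : z ∈ x.2.foldr (· ∪ ·) ∅ := by rw [huniv]; exact Finset.mem_univ z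
      obtain ⟨b, hb, hzb⟩ := mem_foldr_union _ _ this
      exact List.mem_flatMap.mpr ⟨b, hb, (Finset.mem_sort _).mpr hzb⟩
    have hlen : F.length = n := by
      have h1 : F.toFinset = Finset.univ := by
        ext z; simp [hmem z]
      have h2 := List.toFinset_card_of_nodup hnd
      rw [h1, Finset.card_univ, Fintype.card_fin] at h2
      omega
    -- the permutation
    have hσ : ∃ σ : Equiv.Perm (Fin n), ∀ z : Fin n, ((σ.symm z : Fin n) : ℕ) = F.idxOf z := by
      have hbij : Function.Bijective (fun i : Fin n => F.get (Fin.cast hlen.symm i)) := by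
        apply Finite.injective_iff_bijective.mp
        intro i j hij
        have := (hnd.get_inj_iff).mp hij
        have hv := congrArg Fin.val this
        exact Fin.ext hv
      refine ⟨Equiv.ofBijective _ hbij, ?_⟩
      intro z
      have hz : z ∈ F := hmem z
      have hlt : F.idxOf z < F.length := List.idxOf_lt_length_iff.mpr hz
      have h2 : (Equiv.ofBijective _ hbij) (Fin.cast hlen ⟨F.idxOf z, hlt⟩) = z := by
        simp only [Equiv.ofBijective_apply]
        exact List.idxOf_get hlt
      have h3 : (Equiv.ofBijective _ hbij).symm z = Fin.cast hlen ⟨F.idxOf z, hlt⟩ :=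
        (Equiv.symm_apply_eq _).mpr h2.symm
      rw [h3]; rfl
    obtain ⟨σ, hsymm⟩ := hσ
    refine ⟨σ, x.2.map (fun b => b.image σ.symm), ⟨⟨?_, ?_, ?_⟩, ?_⟩, ?_⟩
    · -- blocks nonempty
      intro b hb
      obtain ⟨a, ha, rfl⟩ := List.mem_map.mp hb
      rw [← Finset.nonempty_iff_ne_empty]
      exact (Finset.nonempty_iff_ne_empty.mpr (hne a ha)).image _
    · -- pairwise disjoint
      rw [List.pairwise_map]
      exact hdisj.imp (fun hab => (Finset.disjoint_image σ.symm.injective).mpr hab)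
    · -- union is univ
      rw [foldr_union_map_image, huniv]
      exact Finset.image_univ_of_surjective σ.symm.surjective
    · -- interval property
      rw [List.pairwise_map]
      have hL : (x.2.map (fun b => b.sort (· ≤ ·))).flatMap id = F := by
        rw [List.flatMap_map]; rfl
      have hPI := pairwise_indexOf (x.2.map (fun b => b.sort (· ≤ ·))) (by rw [hL]; exact hnd)
      rw [hL, List.pairwise_map] at hPI
      refine hPI.imp ?_
      intro a b hab u hu v hv
      obtain ⟨zu, hzu, rfl⟩ := Finset.mem_image.mp hu
      obtain ⟨zv, hzv, rfl⟩ := Finset.mem_image.mp hv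
      rw [Fin.lt_def, hsymm zu, hsymm zv]
      exact hab zu ((Finset.mem_sort _).mpr hzu) zv ((Finset.mem_sort _).mpr hzv)
    · -- the conjugation identity
      have hq : ∀ b ∈ x.2.map (fun b => b.image σ.symm), b ≠ ∅ := by
        intro b hb
        obtain ⟨a, ha, rfl⟩ := List.mem_map.mp hb
        rw [← Finset.nonempty_iff_ne_empty]
        exact (Finset.nonempty_iff_ne_empty.mpr (hne a ha)).image _
      have h1 : pmMul n ((σ, [Finset.univ]) : Equiv.Perm (Fin n) × List (Finset (Fin n)))
          (1, x.2.map (fun b => b.image σ.symm)) = (σ, x.2.map (fun b => b.image σ.symm)) := by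
        unfold pmMul
        have hp1 : permAct n (1 : Equiv.Perm (Fin n))⁻¹ [Finset.univ] = [Finset.univ] := by
          simp [permAct]
        rw [hp1, ospMul_univ_left _ hq]
        simp
      rw [h1]
      have hperm : permAct n ((σ⁻¹ : Equiv.Perm (Fin n))⁻¹)
          (x.2.map (fun b => b.image σ.symm)) = x.2 := by
        unfold permAct
        rw [inv_inv, List.map_map]
        have : ∀ b ∈ x.2, ((fun b => b.image ⇑σ) ∘ fun b => b.image ⇑σ.symm) b = id b := by
          intro b _
          simp only [Function.comp_apply, Finset.image_image, Equiv.self_comp_symm,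
            Finset.image_id, id]
        rw [List.map_congr_left this, List.map_id]
      have h2 : pmMul n ((σ, x.2.map (fun b => b.image σ.symm)) :
          Equiv.Perm (Fin n) × List (Finset (Fin n))) (σ⁻¹, [Finset.univ]) = (1, x.2) := by
        unfold pmMul
        rw [hperm, ospMul_univ_right _ hne]
        simp
      rw [h2]
      exact Prod.ext_iff.mpr ⟨hx1, rfl⟩
  · rintro ⟨σ, p, hp, hxe⟩
    have hx1 : x.1 = 1 := by
      have := congrArg Prod.fst hxe
      simpa [pmMul] using this
    have e : pmMul n x x = (1, x.2) := by
      unfold pmMul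
      rw [hx1]
      simp only [one_mul, inv_one]
      have hp1 : permAct n (1 : Equiv.Perm (Fin n)) x.2 = x.2 := by
        simp [permAct]
      rw [hp1, ospMul_self _ ⟨hne, hdisj, huniv⟩]
    rw [e]
    exact Prod.ext_iff.mpr ⟨hx1.symm, rfl⟩
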